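/- Let m ≥ 1. For each i ∈ {1, …, m}, let s_i : ℝ → ℝ be continuous on [1, ∞) and differentiable on (1, ∞), with s_i(1) = 1, s_i(u) > 0 for u ≥ 1, and s_i(k) − k·s_i'(k) > 0 for all k > 1; let f_i(k) := s_i'(k)/(s_i(k) − k·s_i'(k)), and assume f_i is continuous and strictly decreasing on (1, ∞) with lim_{k→∞} f_i(k) = 0, and that lim_{k→∞} k/s_i(k) = ∞. Let λ_i, c_i, x_i > 0 and let n > Σ_{i=1}^m λ_i·x_i. Then there exist a unique ℓ* > 0 and a unique vector k* = (k*_1, …, k*_m) with each k*_i ≥ 1 such that: (i) for each i, either (k*_i > 1 and c_i·f_i(k*_i) = ℓ*) or (k*_i = 1 and ℓ* ≥ c_i·f_i(k) for all k > 1); and (ii) Σ_{i=1}^m λ_i·x_i·k*_i/s_i(k*_i) = n. -/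

import Mathlib

open Set Filter Topology

/-! Auxiliary machinery: for a function `f` that is continuous and strictly
decreasing on `(1, ∞)` with limit `0` at `∞`, we define the "inverse" map
`kf f ℓ` giving the unique root of `f k = ℓ` above `1` (or `1` if no root). -/

private lemma aux_fpos {f : ℝ → ℝ} (hf2 : StrictAntiOn f (Ioi 1))
    (hf3 : Tendsto f atTop (𝓝 0)) : ∀ k > (1 : ℝ), 0 < f k := by
  intro k hk
  have h1 : (0 : ℝ) ≤ f (k + 1) := by
    refine le_of_tendsto hf3 ?_
    filter_upwards [eventually_ge_atTop (k + 1)] with y hy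
    rcases eq_or_lt_of_le hy with h | h
    · exact (congrArg f h.symm).le
    · exact (hf2 (by simp only [mem_Ioi]; linarith) (by simp only [mem_Ioi]; linarith) h).le
  have h2 : f (k + 1) < f k := hf2 (mem_Ioi.2 hk) (by simp only [mem_Ioi]; linarith) (by linarith)
  linarith

private lemma aux_root {f : ℝ → ℝ} (hf1 : ContinuousOn f (Ioi 1))
    (hf3 : Tendsto f atTop (𝓝 0)) {ℓ k0 : ℝ} (hk0 : 1 < k0)
    (hl0 : 0 < ℓ) (hl : ℓ ≤ f k0) : ∃ k, 1 < k ∧ f k = ℓ := by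
  obtain ⟨K, hK1, hK2⟩ :=
    ((hf3.eventually (Iio_mem_nhds hl0)).and (eventually_ge_atTop k0)).exists
  have hsub : Icc k0 K ⊆ Ioi 1 := fun y hy => lt_of_lt_of_le hk0 hy.1
  obtain ⟨k, hk, hfk⟩ := intermediate_value_Icc' hK2 (hf1.mono hsub) ⟨hK1.le, hl⟩
  exact ⟨k, lt_of_lt_of_le hk0 hk.1, hfk⟩

open Classical in
private noncomputable def kf (f : ℝ → ℝ) (ℓ : ℝ) : ℝ :=
  if h : ∃ k, 1 < k ∧ f k = ℓ then h.choose else 1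

private lemma kf_spec {f : ℝ → ℝ} {ℓ : ℝ} (h : ∃ k, 1 < k ∧ f k = ℓ) :
    1 < kf f ℓ ∧ f (kf f ℓ) = ℓ := by
  rw [kf, dif_pos h]; exact h.choose_spec

private lemma kf_of_not {f : ℝ → ℝ} {ℓ : ℝ} (h : ¬∃ k, 1 < k ∧ f k = ℓ) :
    kf f ℓ = 1 := dif_neg h

private lemma kf_ge_one (f : ℝ → ℝ) (ℓ : ℝ) : 1 ≤ kf f ℓ := by
  by_cases h : ∃ k, 1 < k ∧ f k = ℓ
  · exact (kf_spec h).1.le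
  · rw [kf_of_not h]

private lemma kf_of_root {f : ℝ → ℝ} (hf2 : StrictAntiOn f (Ioi 1)) {k : ℝ}
    (hk : 1 < k) : kf f (f k) = k := by
  have h : ∃ k', 1 < k' ∧ f k' = f k := ⟨k, hk, rfl⟩
  have h2 := kf_spec h
  exact hf2.injOn (mem_Ioi.2 h2.1) (mem_Ioi.2 hk) h2.2

private lemma kf_eq_one_forall {f : ℝ → ℝ} (hf1 : ContinuousOn f (Ioi 1))
    (hf3 : Tendsto f atTop (𝓝 0)) {ℓ : ℝ} (hl0 : 0 < ℓ) (h : kf f ℓ = 1) :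
    ∀ k > (1 : ℝ), f k ≤ ℓ := by
  intro k hk
  by_contra hlt
  push_neg at hlt
  obtain ⟨k', hk', hfk'⟩ := aux_root hf1 hf3 hk hl0 hlt.le
  have := (kf_spec ⟨k', hk', hfk'⟩).1
  rw [h] at this; exact lt_irrefl 1 this

private lemma kf_anti {f : ℝ → ℝ} (hf1 : ContinuousOn f (Ioi 1))
    (hf2 : StrictAntiOn f (Ioi 1)) (hf3 : Tendsto f atTop (𝓝 0))
    {ℓ1 ℓ2 : ℝ} (h1 : 0 < ℓ1) (h12 : ℓ1 ≤ ℓ2) : kf f ℓ2 ≤ kf f ℓ1 := by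
  rcases eq_or_lt_of_le h12 with rfl | h12
  · exact le_rfl
  by_cases h : ∃ k, 1 < k ∧ f k = ℓ2
  · obtain ⟨hk2, hfk2⟩ := kf_spec h
    obtain ⟨k1, hk1, hfk1⟩ := aux_root hf1 hf3 hk2 h1 (by rw [hfk2]; exact h12.le)
    have hkf1 : kf f ℓ1 = k1 := by rw [← hfk1]; exact kf_of_root hf2 hk1
    rw [hkf1]
    by_contra hlt
    push_neg at hlt
    have := hf2 (mem_Ioi.2 hk1) (mem_Ioi.2 hk2) hlt
    rw [hfk2, hfk1] at this; linarith
  · rw [kf_of_not h]; exact kf_ge_one f ℓ1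

private lemma phi_surj {φ : ℝ → ℝ} (hφ1 : ContinuousOn φ (Ici 1))
    (hφ3 : Tendsto φ atTop atTop) {kb y : ℝ} (hkb : 1 ≤ kb) (hy : φ kb < y) :
    ∃ k, kb < k ∧ φ k = y := by
  obtain ⟨K, hK1, hK2⟩ := ((hφ3.eventually_ge_atTop y).and (eventually_ge_atTop kb)).exists
  have hsub : Icc kb K ⊆ Ici 1 := fun z hz => le_trans hkb hz.1
  obtain ⟨k, hk, hfk⟩ := intermediate_value_Icc hK2 (hφ1.mono hsub) ⟨hy.le, hK1⟩
  refine ⟨k, lt_of_le_of_ne hk.1 ?_, hfk⟩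
  rintro rfl
  exact absurd hfk (ne_of_lt hy)

private lemma psi_contAt {f φ : ℝ → ℝ}
    (hf1 : ContinuousOn f (Ioi 1)) (hf2 : StrictAntiOn f (Ioi 1))
    (hf3 : Tendsto f atTop (𝓝 0))
    (hφ1 : ContinuousOn φ (Ici 1)) (hφ2 : StrictMonoOn φ (Ici 1))
    (hφ3 : Tendsto φ atTop atTop) (hφ4 : φ 1 = 1)
    {a : ℝ} (ha : 0 < a) : ContinuousAt (fun ℓ => φ (kf f ℓ)) a := by
  by_cases hcase : ∃ k, 1 < k ∧ a < f k
  · obtain ⟨kb, hkb, hakb⟩ := hcase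
    have hkb1 : (1 : ℝ) ≤ kb := hkb.le
    have hs : Ioo (0 : ℝ) (f kb) ∈ 𝓝 a := isOpen_Ioo.mem_nhds ⟨ha, hakb⟩
    have key : ∀ ℓ ∈ Ioo (0 : ℝ) (f kb), kb < kf f ℓ ∧ f (kf f ℓ) = ℓ := by
      intro ℓ hℓ
      obtain ⟨k, hk, hfk⟩ := aux_root hf1 hf3 hkb hℓ.1 hℓ.2.le
      have hkeq : kf f ℓ = k := by rw [← hfk]; exact kf_of_root hf2 hk
      rw [hkeq]
      refine ⟨?_, hfk⟩
      by_contra hle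
      push_neg at hle
      rcases eq_or_lt_of_le hle with rfl | hlt
      · rw [hfk] at hℓ; exact absurd hℓ.2 (lt_irrefl _)
      · have := hf2 (mem_Ioi.2 hk) (mem_Ioi.2 hkb) hlt
        rw [hfk] at this
        exact absurd hℓ.2 (not_lt.2 this.le)
    have hmono : MonotoneOn (fun ℓ => -φ (kf f ℓ)) (Ioo (0 : ℝ) (f kb)) := by
      intro ℓ1 h1 ℓ2 h2 h12
      have hk21 : kf f ℓ2 ≤ kf f ℓ1 := kf_anti hf1 hf2 hf3 h1.1 h12
      have := hφ2.monotoneOn (mem_Ici.2 (le_trans hkb1 (key ℓ2 h2).1.le))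
        (mem_Ici.2 (le_trans hkb1 (key ℓ1 h1).1.le)) hk21
      simpa using this
    have hka := (key a ⟨ha, hakb⟩).1
    have himg : (fun ℓ => -φ (kf f ℓ)) '' Ioo (0 : ℝ) (f kb) ∈ 𝓝 (-φ (kf f a)) := by
      have hlt : φ kb < φ (kf f a) :=
        hφ2 (mem_Ici.2 hkb1) (mem_Ici.2 (le_trans hkb1 hka.le)) hka
      refine mem_of_superset (Iio_mem_nhds (neg_lt_neg hlt)) ?_
      intro y hy
      have hy' : φ kb < -y := by
        simp only [mem_Iio] at hy; linarith
      obtain ⟨k, hk, hfk⟩ := phi_surj hφ1 hφ3 hkb1 hy'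
      have hk1 : 1 < k := lt_of_le_of_lt hkb1 hk
      have hfpos : 0 < f k := aux_fpos hf2 hf3 k hk1
      have hfk2 : f k < f kb := hf2 (mem_Ioi.2 hkb) (mem_Ioi.2 hk1) hk
      refine ⟨f k, ⟨hfpos, hfk2⟩, ?_⟩
      show -φ (kf f (f k)) = y
      rw [kf_of_root hf2 hk1, hfk]; ring
    have hneg := continuousAt_of_monotoneOn_of_image_mem_nhds hmono hs himg
    have := hneg.neg
    simpa only [Pi.neg_def, neg_neg] using this
  · push_neg at hcase
    have hstrict : ∀ k, 1 < k → f k < a := by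
      intro k hk
      have hmid : (1 : ℝ) < (1 + k) / 2 := by linarith
      have hmid2 : (1 + k) / 2 < k := by linarith
      exact lt_of_lt_of_le (hf2 (mem_Ioi.2 hmid) (mem_Ioi.2 hk) hmid2) (hcase _ hmid)
    have hka : kf f a = 1 := by
      apply kf_of_not
      rintro ⟨k, hk, hfk⟩
      exact absurd hfk (ne_of_lt (hstrict k hk))
    have hψa : φ (kf f a) = 1 := by rw [hka, hφ4]
    have hge1 : ∀ ℓ : ℝ, 1 ≤ φ (kf f ℓ) := by
      intro ℓ
      have := hφ2.monotoneOn self_mem_Ici (mem_Ici.2 (kf_ge_one f ℓ)) (kf_ge_one f ℓ)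
      rwa [hφ4] at this
    rw [ContinuousAt, hψa, tendsto_order]
    constructor
    · intro y hy
      filter_upwards with ℓ
      exact lt_of_lt_of_le hy (hge1 ℓ)
    · intro y hy
      have hev : ∀ᶠ k in 𝓝[>] (1 : ℝ), φ k < y := by
        have hc : ContinuousWithinAt φ (Ici 1) 1 := hφ1 1 self_mem_Ici
        have hmem : ∀ᶠ z in 𝓝 (φ 1), z < y := Iio_mem_nhds (by rw [hφ4]; exact hy)
        have h2 : ∀ᶠ k in 𝓝[Ici 1] (1 : ℝ), φ k < y := hc.eventually hmem
        exact h2.filter_mono (nhdsWithin_mono 1 Ioi_subset_Ici_self)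
      obtain ⟨k0, hk0y, hk0⟩ := (hev.and self_mem_nhdsWithin).exists
      have hfk0 : f k0 < a := hstrict k0 hk0
      filter_upwards [Ioi_mem_nhds hfk0] with ℓ hℓ
      rw [Set.mem_Ioi] at hℓ
      have hle : kf f ℓ ≤ k0 := by
        by_cases h : ∃ k, 1 < k ∧ f k = ℓ
        · obtain ⟨hk1, hk2⟩ := kf_spec h
          by_contra hlt
          push_neg at hlt
          have := hf2 (mem_Ioi.2 hk0) (mem_Ioi.2 hk1) hlt
          rw [hk2] at this
          exact absurd hℓ (not_lt.2 this.le)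
        · rw [kf_of_not h]; exact hk0.le
      calc φ (kf f ℓ) ≤ φ k0 :=
            hφ2.monotoneOn (mem_Ici.2 (kf_ge_one f ℓ)) (mem_Ici.2 hk0.le) hle
        _ < y := hk0y

/-- Existence and uniqueness of the market-clearing service cost `ℓ*` and per-class
allocation `k*` at the WHAM mean field stationary point: each `k*ᵢ` is either the
unique solution of `cᵢ · fᵢ(k) = ℓ*` above 1, or equal to 1 when the price `ℓ*`
dominates `cᵢ · fᵢ` everywhere, and the total effective load equals `n`. -/
theorem stmt_12 (m : ℕ) (hm : 1 ≤ m) (s s' : Fin m → ℝ → ℝ)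
    (hcont : ∀ i, ContinuousOn (s i) (Set.Ici (1 : ℝ)))
    (hderiv : ∀ i, ∀ k > (1 : ℝ), HasDerivAt (s i) (s' i k) k)
    (hone : ∀ i, s i 1 = 1)
    (hpos : ∀ i, ∀ u ≥ (1 : ℝ), 0 < s i u)
    (hden : ∀ i, ∀ k > (1 : ℝ), 0 < s i k - k * s' i k)
    (hfcont : ∀ i,
      ContinuousOn (fun k => s' i k / (s i k - k * s' i k)) (Set.Ioi (1 : ℝ)))
    (hfanti : ∀ i,
      StrictAntiOn (fun k => s' i k / (s i k - k * s' i k)) (Set.Ioi (1 : ℝ)))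
    (hflim : ∀ i, Filter.Tendsto (fun k => s' i k / (s i k - k * s' i k))
      Filter.atTop (nhds 0))
    (hklim : ∀ i, Filter.Tendsto (fun k => k / s i k) Filter.atTop Filter.atTop)
    (lam c x : Fin m → ℝ)
    (hlam : ∀ i, 0 < lam i) (hc : ∀ i, 0 < c i) (hx : ∀ i, 0 < x i)
    (n : ℝ) (hn : (∑ i, lam i * x i) < n) :
    ∃! p : ℝ × (Fin m → ℝ),
      0 < p.1 ∧ (∀ i, 1 ≤ p.2 i) ∧
      (∀ i,
        (1 < p.2 i ∧
          c i * (s' i (p.2 i) / (s i (p.2 i) - p.2 i * s' i (p.2 i))) = p.1) ∨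
        (p.2 i = 1 ∧
          ∀ k > (1 : ℝ), p.1 ≥ c i * (s' i k / (s i k - k * s' i k)))) ∧
      (∑ i, lam i * x i * p.2 i / s i (p.2 i)) = n := by
  classical
  -- the per-class price functions and speedup-efficiency functions
  set F : Fin m → ℝ → ℝ := fun i k => c i * (s' i k / (s i k - k * s' i k)) with hFdef
  set φ : Fin m → ℝ → ℝ := fun i k => k / s i k with hφdef
  have hsne : ∀ i, ∀ u ∈ Ici (1 : ℝ), s i u ≠ 0 := fun i u hu => ne_of_gt (hpos i u hu)
  have hF1 : ∀ i, ContinuousOn (F i) (Ioi 1) := fun i => continuousOn_const.mul (hfcont i)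
  have hF2 : ∀ i, StrictAntiOn (F i) (Ioi 1) := by
    intro i a ha b hb hab
    exact mul_lt_mul_of_pos_left (hfanti i ha hb hab) (hc i)
  have hF3 : ∀ i, Tendsto (F i) atTop (𝓝 0) := by
    intro i
    have := (hflim i).const_mul (c i)
    simpa using this
  have hφ1 : ∀ i, ContinuousOn (φ i) (Ici 1) := fun i =>
    continuousOn_id.div (hcont i) (hsne i)
  have hφ4 : ∀ i, φ i 1 = 1 := by intro i; simp [hφdef, hone i]
  have hφ2 : ∀ i, StrictMonoOn (φ i) (Ici 1) := by
    intro i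
    apply strictMonoOn_of_deriv_pos (convex_Ici 1) (hφ1 i)
    intro k hk
    rw [interior_Ici] at hk
    have hk1 : (1 : ℝ) < k := hk
    have hd : HasDerivAt (φ i) ((1 * s i k - k * s' i k) / s i k ^ 2) k :=
      (hasDerivAt_id k).div (hderiv i k hk1) (hsne i k (mem_Ici.2 hk1.le))
    rw [hd.deriv]
    apply div_pos
    · rw [one_mul]; exact hden i k hk1
    · exact pow_pos (hpos i k hk1.le) 2
  have hφ3 : ∀ i, Tendsto (φ i) atTop atTop := hklim
  -- basic facts
  have hψge1 : ∀ i (ℓ : ℝ), 1 ≤ φ i (kf (F i) ℓ) := by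
    intro i ℓ
    have := (hφ2 i).monotoneOn self_mem_Ici (mem_Ici.2 (kf_ge_one (F i) ℓ))
      (kf_ge_one (F i) ℓ)
    rwa [hφ4 i] at this
  have hlxpos : ∀ i, 0 < lam i * x i := fun i => mul_pos (hlam i) (hx i)
  -- the aggregate load function
  set G : ℝ → ℝ := fun ℓ => ∑ i, lam i * x i * φ i (kf (F i) ℓ) with hGdef
  have hGanti : ∀ {ℓ1 ℓ2 : ℝ}, 0 < ℓ1 → ℓ1 ≤ ℓ2 → G ℓ2 ≤ G ℓ1 := by
    intro ℓ1 ℓ2 h1 h12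
    apply Finset.sum_le_sum
    intro i _
    have hk := kf_anti (hF1 i) (hF2 i) (hF3 i) h1 h12
    exact mul_le_mul_of_nonneg_left
      ((hφ2 i).monotoneOn (mem_Ici.2 (kf_ge_one _ _)) (mem_Ici.2 (kf_ge_one _ _)) hk)
      (hlxpos i).le
  -- a price where the load is at least n
  have hne : Nonempty (Fin m) := ⟨⟨0, hm⟩⟩
  set i0 : Fin m := ⟨0, hm⟩ with hi0
  have hterm_le : lam i0 * x i0 ≤ ∑ i, lam i * x i :=
    Finset.single_le_sum (fun i _ => (hlxpos i).le) (Finset.mem_univ i0)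
  have hy0 : (1 : ℝ) < n / (lam i0 * x i0) :=
    (one_lt_div (hlxpos i0)).2 (lt_of_le_of_lt hterm_le hn)
  obtain ⟨k0, hk0, hφk0⟩ := phi_surj (hφ1 i0) (hφ3 i0) le_rfl (by rw [hφ4 i0]; exact hy0)
  set ℓ0 : ℝ := F i0 k0 with hℓ0def
  have hℓ0pos : 0 < ℓ0 := aux_fpos (hF2 i0) (hF3 i0) k0 hk0
  have hGℓ0 : n ≤ G ℓ0 := by
    have hkf0 : kf (F i0) ℓ0 = k0 := kf_of_root (hF2 i0) hk0
    have hterm : lam i0 * x i0 * φ i0 (kf (F i0) ℓ0) = n := by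
      rw [hkf0, hφk0, mul_div_cancel₀ _ (ne_of_gt (hlxpos i0))]
    calc n = lam i0 * x i0 * φ i0 (kf (F i0) ℓ0) := hterm.symm
      _ ≤ G ℓ0 := Finset.single_le_sum
            (fun i _ => le_trans (by linarith [hlxpos i]) (mul_le_mul_of_nonneg_left
              (hψge1 i ℓ0) (hlxpos i).le)) (Finset.mem_univ i0)
  -- a price where the load is below n
  have hmpos : (0 : ℝ) < (m : ℝ) := by exact_mod_cast lt_of_lt_of_le Nat.zero_lt_one hm
  set ε : ℝ := n - ∑ i, lam i * x i with hεdef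
  have hεpos : 0 < ε := by simp [hεdef]; linarith
  have hchoice : ∀ i : Fin m, ∃ ℓ > 0, lam i * x i * φ i (kf (F i) ℓ)
      = lam i * x i + ε / (2 * m) := by
    intro i
    have hypos : 0 < ε / (2 * m) := div_pos hεpos (by positivity)
    have hy1 : (1 : ℝ) < (lam i * x i + ε / (2 * m)) / (lam i * x i) :=
      (one_lt_div (hlxpos i)).2 (by linarith)
    obtain ⟨k, hk, hφk⟩ := phi_surj (hφ1 i) (hφ3 i) le_rfl (by rw [hφ4 i]; exact hy1)
    refine ⟨F i k, aux_fpos (hF2 i) (hF3 i) k hk, ?_⟩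
    rw [kf_of_root (hF2 i) hk, hφk, mul_div_cancel₀ _ (ne_of_gt (hlxpos i))]
  choose ℓs hℓspos hℓsval using hchoice
  set ℓmax : ℝ := Finset.univ.sup' (Finset.univ_nonempty) ℓs with hℓmaxdef
  have hℓmax_ge : ∀ i, ℓs i ≤ ℓmax := fun i => Finset.le_sup' ℓs (Finset.mem_univ i)
  have hℓmaxpos : 0 < ℓmax := lt_of_lt_of_le (hℓspos i0) (hℓmax_ge i0)
  have hGℓmax : G ℓmax < n := by
    have hbound : ∀ i : Fin m, lam i * x i * φ i (kf (F i) ℓmax)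
        ≤ lam i * x i + ε / (2 * m) := by
      intro i
      rw [← hℓsval i]
      have hk := kf_anti (hF1 i) (hF2 i) (hF3 i) (hℓspos i) (hℓmax_ge i)
      exact mul_le_mul_of_nonneg_left
        ((hφ2 i).monotoneOn (mem_Ici.2 (kf_ge_one _ _)) (mem_Ici.2 (kf_ge_one _ _)) hk)
        (hlxpos i).le
    calc G ℓmax ≤ ∑ i, (lam i * x i + ε / (2 * m)) :=
          Finset.sum_le_sum fun i _ => hbound i
      _ = (∑ i, lam i * x i) + m * (ε / (2 * m)) := by
          rw [Finset.sum_add_distrib, Finset.sum_const, Finset.card_univ,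
            Fintype.card_fin, nsmul_eq_mul]
      _ = (∑ i, lam i * x i) + ε / 2 := by
          congr 1; field_simp
      _ < n := by simp [hεdef]; linarith
  -- IVT gives the equilibrium price
  have hab : ℓ0 ≤ ℓmax := by
    by_contra hlt
    push_neg at hlt
    have := hGanti hℓmaxpos hlt.le
    linarith
  have hGcont : ContinuousOn G (Icc ℓ0 ℓmax) := by
    apply continuousOn_finset_sum
    intro i _
    apply ContinuousOn.mul continuousOn_const
    intro ℓ hℓ
    exact (psi_contAt (hF1 i) (hF2 i) (hF3 i) (hφ1 i) (hφ2 i) (hφ3 i) (hφ4 i)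
      (lt_of_lt_of_le hℓ0pos hℓ.1)).continuousWithinAt
  obtain ⟨ℓstar, hℓstarmem, hGℓstar⟩ :=
    intermediate_value_Icc' hab hGcont ⟨hGℓmax.le, hGℓ0⟩
  have hℓstarpos : 0 < ℓstar := lt_of_lt_of_le hℓ0pos hℓstarmem.1
  -- the candidate solution
  refine ⟨(ℓstar, fun i => kf (F i) ℓstar), ⟨hℓstarpos, fun i => kf_ge_one _ _, ?_, ?_⟩, ?_⟩
  · intro i
    by_cases h : ∃ k, 1 < k ∧ F i k = ℓstar
    · exact Or.inl ⟨(kf_spec h).1, (kf_spec h).2⟩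
    · refine Or.inr ⟨kf_of_not h, ?_⟩
      intro k hk
      exact kf_eq_one_forall (hF1 i) (hF3 i) hℓstarpos (kf_of_not h) k hk
  · rw [← hGℓstar]
    refine Finset.sum_congr rfl fun i _ => ?_
    simp only [hφdef]
    exact mul_div_assoc _ _ _
  · -- uniqueness
    rintro ⟨ℓ2, K2⟩ ⟨h2pos, h2ge, h2cond, h2sum⟩
    -- first, a general asymmetric key fact
    have key : ∀ (ℓa : ℝ) (Ka : Fin m → ℝ) (ℓb : ℝ) (Kb : Fin m → ℝ),
        (0 < ℓa) → (∀ i, 1 ≤ Ka i) →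
        (∀ i, (1 < Ka i ∧ F i (Ka i) = ℓa) ∨
          (Ka i = 1 ∧ ∀ k > (1 : ℝ), ℓa ≥ F i k)) →
        (∑ i, lam i * x i * Ka i / s i (Ka i)) = n →
        (0 < ℓb) → (∀ i, 1 ≤ Kb i) →
        (∀ i, (1 < Kb i ∧ F i (Kb i) = ℓb) ∨
          (Kb i = 1 ∧ ∀ k > (1 : ℝ), ℓb ≥ F i k)) →
        (∑ i, lam i * x i * Kb i / s i (Kb i)) = n →
        ℓa < ℓb → False := by
      intro ℓa Ka ℓb Kb hapos hage hacond hasum hbpos hbge hbcond hbsum hab2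
      have hle : ∀ i, Kb i ≤ Ka i := by
        intro i
        rcases hbcond i with ⟨hbi, hbeq⟩ | ⟨hbi, _⟩
        · rcases hacond i with ⟨hai, haeq⟩ | ⟨hai, hall⟩
          · by_contra hlt
            push_neg at hlt
            have := hF2 i (mem_Ioi.2 hai) (mem_Ioi.2 (lt_trans hai hlt)) hlt
            rw [hbeq, haeq] at this
            linarith
          · have := hall (Kb i) hbi
            rw [hbeq] at this
            linarith
        · rw [hbi]; exact hage i
      have hexists : ∃ i, 1 < Ka i := by
        by_contra hno
        push_neg at hno
        have hall1 : ∀ i, Ka i = 1 := fun i => le_antisymm (hno i) (hage i)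
        rw [show (∑ i, lam i * x i * Ka i / s i (Ka i)) = ∑ i, lam i * x i from
          Finset.sum_congr rfl fun i _ => by rw [hall1 i, hone i]; ring] at hasum
        linarith
      obtain ⟨j, hj⟩ := hexists
      have hjlt : Kb j < Ka j := by
        rcases hbcond j with ⟨hbj, hbeq⟩ | ⟨hbj, _⟩
        · rcases hacond j with ⟨haj, haeq⟩ | ⟨haj, hall⟩
          · by_contra hlt
            push_neg at hlt
            rcases eq_or_lt_of_le hlt with heq | hlt2
            · rw [← heq, haeq] at hbeq; linarith
            · have := hF2 j (mem_Ioi.2 haj) (mem_Ioi.2 (lt_trans haj hlt2)) hlt2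
              rw [hbeq, haeq] at this; linarith
          · rw [haj] at hj; linarith
        · rw [hbj]; exact hj
      have hsumlt : (∑ i, lam i * x i * Kb i / s i (Kb i))
          < ∑ i, lam i * x i * Ka i / s i (Ka i) := by
        apply Finset.sum_lt_sum
        · intro i _
          rw [mul_div_assoc, mul_div_assoc]
          exact mul_le_mul_of_nonneg_left
            ((hφ2 i).monotoneOn (mem_Ici.2 (hbge i)) (mem_Ici.2 (hage i)) (hle i))
            (hlxpos i).le
        · refine ⟨j, Finset.mem_univ j, ?_⟩
          rw [mul_div_assoc, mul_div_assoc]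
          exact mul_lt_mul_of_pos_left
            (hφ2 j (mem_Ici.2 (hbge j)) (mem_Ici.2 (hage j)) hjlt) (hlxpos j)
      rw [hasum, hbsum] at hsumlt
      linarith
    -- our constructed solution's properties, named
    have hpcond : ∀ i, (1 < kf (F i) ℓstar ∧ F i (kf (F i) ℓstar) = ℓstar) ∨
        (kf (F i) ℓstar = 1 ∧ ∀ k > (1 : ℝ), ℓstar ≥ F i k) := by
      intro i
      by_cases h : ∃ k, 1 < k ∧ F i k = ℓstar
      · exact Or.inl ⟨(kf_spec h).1, (kf_spec h).2⟩
      · exact Or.inr ⟨kf_of_not h,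
          fun k hk => kf_eq_one_forall (hF1 i) (hF3 i) hℓstarpos (kf_of_not h) k hk⟩
    have hpsum : (∑ i, lam i * x i * kf (F i) ℓstar / s i (kf (F i) ℓstar)) = n := by
      rw [← hGℓstar]
      refine Finset.sum_congr rfl fun i _ => ?_
      simp only [hφdef]
      exact mul_div_assoc _ _ _
    have h2cond' : ∀ i, (1 < K2 i ∧ F i (K2 i) = ℓ2) ∨
        (K2 i = 1 ∧ ∀ k > (1 : ℝ), ℓ2 ≥ F i k) := h2cond
    -- equal prices
    have hℓeq : ℓ2 = ℓstar := by
      rcases lt_trichotomy ℓ2 ℓstar with h | h | h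
      · exact absurd h (fun h => key ℓ2 K2 ℓstar (fun i => kf (F i) ℓstar)
          h2pos h2ge h2cond' h2sum hℓstarpos (fun i => kf_ge_one _ _) hpcond hpsum h)
      · exact h
      · exact absurd h (fun h => key ℓstar (fun i => kf (F i) ℓstar) ℓ2 K2
          hℓstarpos (fun i => kf_ge_one _ _) hpcond hpsum h2pos h2ge h2cond' h2sum h)
    -- equal allocations
    have hKeq : K2 = fun i => kf (F i) ℓstar := by
      funext i
      rcases h2cond' i with ⟨h2i, h2eq⟩ | ⟨h2i, h2all⟩
      · rcases hpcond i with ⟨hpi, hpeq⟩ | ⟨hpi, hpall⟩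
        · exact (hF2 i).injOn (mem_Ioi.2 h2i) (mem_Ioi.2 hpi) (by rw [h2eq, hpeq, hℓeq])
        · exfalso
          have hmid : (1 : ℝ) < (1 + K2 i) / 2 := by linarith
          have hmid2 : (1 + K2 i) / 2 < K2 i := by linarith
          have h1 := hpall ((1 + K2 i) / 2) hmid
          have h2 := hF2 i (mem_Ioi.2 hmid) (mem_Ioi.2 h2i) hmid2
          rw [h2eq, hℓeq] at h2
          linarith
      · rcases hpcond i with ⟨hpi, hpeq⟩ | ⟨hpi, hpall⟩
        · exfalso
          have hmid : (1 : ℝ) < (1 + kf (F i) ℓstar) / 2 := by linarith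
          have hmid2 : (1 + kf (F i) ℓstar) / 2 < kf (F i) ℓstar := by linarith
          have h1 := h2all ((1 + kf (F i) ℓstar) / 2) hmid
          have h2 := hF2 i (mem_Ioi.2 hmid) (mem_Ioi.2 hpi) hmid2
          rw [hpeq] at h2
          rw [hℓeq] at h1
          linarith
        · rw [h2i, hpi]
    exact Prod.ext hℓeq hKeq
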